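/- Let L be a Lie algebra over a field of characteristic zero and let V ∈ L be an element whose adjoint map ad_V is nilpotent. Then for all Y, Λ ∈ L one has Σ_{k≥0} (1/(k+1)!) Σ_{l=0}^{k} (ad_V)^l ⁅Y, (ad_V)^{k−l} Λ⁆ = ⁅ Σ_{m≥0} (1/(m+1)!) (ad_V)^m Y , Σ_{n≥0} (1/n!) (ad_V)^n Λ ⁆, where all sums are finite because ad_V is nilpotent. -/

import Mathlib

open Finset

-- helper: zero for high powers
lemma pow_apply_zero_of_le {K L : Type*} [Field K] [AddCommGroup L] [Module K L]
    {f : Module.End K L} {N : ℕ} (hN : f ^ N = 0) {n : ℕ} (hn : N ≤ n) (x : L) :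
    (f ^ n) x = 0 := by
  have : f ^ n = f ^ (n - N) * f ^ N := by rw [← pow_add]; congr 1; omega
  rw [this, hN, mul_zero]; rfl

-- reindex triangle to square with vanishing
lemma triangle_eq_square {L : Type*} [AddCommGroup L] (N : ℕ) (g : ℕ → ℕ → L)
    (h1 : ∀ m n, N ≤ m → g m n = 0) (h2 : ∀ m n, N ≤ n → g m n = 0) :
    ∑ k ∈ range (2 * N), ∑ i ∈ range (k + 1), g i (k - i)
      = ∑ m ∈ range (2 * N), ∑ n ∈ range (2 * N), g m n := by
  have key : ∑ k ∈ range (2 * N), ∑ i ∈ range (k + 1), g i (k - i)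
      = ∑ p ∈ (range (2*N) ×ˢ range (2*N)).filter (fun p => p.1 + p.2 < 2*N),
          g p.1 p.2 := by
    rw [Finset.sum_sigma']
    refine sum_nbij' (fun x => (x.2, x.1 - x.2)) (fun p => ⟨p.1 + p.2, p.1⟩) ?_ ?_ ?_ ?_ ?_
    · rintro ⟨k, i⟩ h
      simp only [mem_sigma, mem_range] at h
      simp only [mem_filter, mem_product, mem_range]
      omega
    · rintro ⟨m, n⟩ h
      simp only [mem_filter, mem_product, mem_range] at h
      simp only [mem_sigma, mem_range]
      omega
    · rintro ⟨k, i⟩ h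
      simp only [mem_sigma, mem_range] at h
      simp only [Sigma.mk.inj_iff]
      exact ⟨by omega, HEq.rfl⟩
    · rintro ⟨m, n⟩ h
      simp only [mem_filter, mem_product, mem_range] at h
      simp only [Prod.mk.injEq]
      exact ⟨trivial, by omega⟩
    · rintro ⟨k, i⟩ h; rfl
  rw [key, sum_filter_of_ne, ← Finset.sum_product']
  rintro ⟨m, n⟩ h hne
  by_contra hc
  push_neg at hc
  rcases le_or_gt N m with hm | hm
  · exact hne (h1 m n hm)
  · exact hne (h2 m n (by omega))

/-- for `V` with nilpotent adjoint action, the "derivative of the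
exponential" identity
`Σ_{k≥0} (1/(k+1)!) Σ_{l=0}^{k} (ad_V)^l ⁅Y, (ad_V)^{k−l} Λ⁆
  = ⁅Σ_{m≥0} (1/(m+1)!)(ad_V)^m Y, Σ_{n≥0} (1/n!)(ad_V)^n Λ⁆`. -/
theorem stmt_2 {K : Type*} [Field K] [CharZero K] {L : Type*} [LieRing L] [LieAlgebra K L]
    (V : L) (hV : ∃ N : ℕ, (LieAlgebra.ad K L V) ^ N = 0) (Y Λ : L) :
    (∑ᶠ k : ℕ, (((k + 1).factorial : K)⁻¹ •
        ∑ l ∈ Finset.range (k + 1),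
          ((LieAlgebra.ad K L V) ^ l) ⁅Y, ((LieAlgebra.ad K L V) ^ (k - l)) Λ⁆))
      = ⁅∑ᶠ m : ℕ, (((m + 1).factorial : K)⁻¹ • ((LieAlgebra.ad K L V) ^ m) Y),
         ∑ᶠ n : ℕ, ((n.factorial : K)⁻¹ • ((LieAlgebra.ad K L V) ^ n) Λ)⁆ := by
  classical
  obtain ⟨N, hN⟩ := hV
  set f := LieAlgebra.ad K L V with hf
  have hz : ∀ {n : ℕ}, N ≤ n → ∀ x : L, (f ^ n) x = 0 :=
    fun hn x => pow_apply_zero_of_le hN hn x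
  -- the common double-sum term
  set g : ℕ → ℕ → L := fun m n =>
    ((((m + 1).factorial : K)⁻¹ * ((n).factorial : K)⁻¹) • ⁅(f ^ m) Y, (f ^ n) Λ⁆) with hg
  have hg1 : ∀ m n, N ≤ m → g m n = 0 := by
    intro m n hm; simp [hg, hz hm Y]
  have hg2 : ∀ m n, N ≤ n → g m n = 0 := by
    intro m n hn; simp [hg, hz hn Λ]
  -- replace finsums by finite sums over range (2*N)
  have hY : (∑ᶠ m : ℕ, (((m + 1).factorial : K)⁻¹ • (f ^ m) Y))
      = ∑ m ∈ range (2 * N), ((m + 1).factorial : K)⁻¹ • (f ^ m) Y := by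
    apply finsum_eq_finset_sum_of_support_subset
    intro m hm
    simp only [Function.mem_support, ne_eq] at hm
    simp only [coe_range, Set.mem_Iio]
    by_contra hc
    exact hm (by rw [hz (by omega) Y, smul_zero])
  have hΛ : (∑ᶠ n : ℕ, ((n.factorial : K)⁻¹ • (f ^ n) Λ))
      = ∑ n ∈ range (2 * N), (n.factorial : K)⁻¹ • (f ^ n) Λ := by
    apply finsum_eq_finset_sum_of_support_subset
    intro n hn
    simp only [Function.mem_support, ne_eq] at hn
    simp only [coe_range, Set.mem_Iio]
    by_contra hc
    exact hn (by rw [hz (by omega) Λ, smul_zero])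
  have hLHS : (∑ᶠ k : ℕ, (((k + 1).factorial : K)⁻¹ •
        ∑ l ∈ Finset.range (k + 1), (f ^ l) ⁅Y, (f ^ (k - l)) Λ⁆))
      = ∑ k ∈ range (2 * N), (((k + 1).factorial : K)⁻¹ •
          ∑ l ∈ Finset.range (k + 1), (f ^ l) ⁅Y, (f ^ (k - l)) Λ⁆) := by
    apply finsum_eq_finset_sum_of_support_subset
    intro k hk
    simp only [Function.mem_support, ne_eq] at hk
    simp only [coe_range, Set.mem_Iio]
    by_contra hc
    apply hk
    have : ∀ l ∈ Finset.range (k + 1), (f ^ l) ⁅Y, (f ^ (k - l)) Λ⁆ = 0 := by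
      intro l hl
      rw [mem_range] at hl
      rcases le_or_gt N l with h | h
      · exact hz h _
      · rw [hz (show N ≤ k - l by omega) Λ, lie_zero, map_zero]
    rw [Finset.sum_congr rfl this, Finset.sum_const_zero, smul_zero]
  rw [hLHS, hY, hΛ]
  -- expand the right-hand side bilinearly
  have hRHS : ⁅∑ m ∈ range (2 * N), ((m + 1).factorial : K)⁻¹ • (f ^ m) Y,
        ∑ n ∈ range (2 * N), (n.factorial : K)⁻¹ • (f ^ n) Λ⁆
      = ∑ m ∈ range (2 * N), ∑ n ∈ range (2 * N), g m n := by
    have sum_lie' : ∀ (s : Finset ℕ) (a : ℕ → L) (z : L),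
        ⁅∑ m ∈ s, a m, z⁆ = ∑ m ∈ s, ⁅a m, z⁆ := by
      intro s a z
      induction s using Finset.induction_on with
      | empty => simp
      | @insert _ _ hx ih => rw [Finset.sum_insert hx, Finset.sum_insert hx, add_lie, ih]
    have lie_sum' : ∀ (x : L) (s : Finset ℕ) (a : ℕ → L),
        ⁅x, ∑ n ∈ s, a n⁆ = ∑ n ∈ s, ⁅x, a n⁆ := by
      intro x s a
      induction s using Finset.induction_on with
      | empty => simp
      | @insert _ _ hx ih => rw [Finset.sum_insert hx, Finset.sum_insert hx, lie_add, ih]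
    rw [sum_lie']
    refine Finset.sum_congr rfl fun m _ => ?_
    rw [lie_sum']
    refine Finset.sum_congr rfl fun n _ => ?_
    rw [smul_lie, lie_smul, smul_smul, hg]
  rw [hRHS, ← triangle_eq_square N g hg1 hg2]
  -- now the key per-`k` identity
  refine Finset.sum_congr rfl fun k _ => ?_
  -- Leibniz rule for each term
  have step1 : ∀ l ∈ range (k + 1), (f ^ l) ⁅Y, (f ^ (k - l)) Λ⁆
      = ∑ i ∈ range (l + 1), l.choose i • ⁅(f ^ i) Y, (f ^ (k - i)) Λ⁆ := by
    intro l hl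
    rw [mem_range] at hl
    rw [hf, LieAlgebra.ad_pow_lie,
      Finset.Nat.sum_antidiagonal_eq_sum_range_succ
        (fun a b => l.choose a • ⁅((LieAlgebra.ad K L V) ^ a) Y,
          ((LieAlgebra.ad K L V) ^ b) (((LieAlgebra.ad K L V) ^ (k - l)) Λ)⁆) l]
    refine Finset.sum_congr rfl fun i hi => ?_
    rw [mem_range] at hi
    congr 2
    rw [← Module.End.mul_apply, ← pow_add]
    congr 2
    omega
  rw [Finset.sum_congr rfl step1]
  -- swap the triangular double sum
  have swap : ∑ l ∈ range (k + 1), ∑ i ∈ range (l + 1),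
        l.choose i • ⁅(f ^ i) Y, (f ^ (k - i)) Λ⁆
      = ∑ i ∈ range (k + 1), ∑ l ∈ Finset.Icc i k,
        l.choose i • ⁅(f ^ i) Y, (f ^ (k - i)) Λ⁆ := by
    have := Finset.sum_Ico_Ico_comm 0 (k + 1)
      (fun i l => l.choose i • ⁅(f ^ i) Y, (f ^ (k - i)) Λ⁆)
    simp only [Finset.range_eq_Ico] at *
    rw [← this]
    refine Finset.sum_congr rfl fun i hi => ?_
    refine Finset.sum_congr ?_ fun l hl => rfl
    rw [Finset.mem_Ico] at hi
    ext l; rw [Finset.mem_Ico, Finset.mem_Icc]; omega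
  rw [swap, Finset.smul_sum]
  refine Finset.sum_congr rfl fun i hi => ?_
  rw [mem_range] at hi
  rw [← Finset.sum_smul, Nat.sum_Icc_choose, ← Nat.cast_smul_eq_nsmul K, smul_smul, hg]
  congr 1
  have h1 : ((i + 1).factorial : K) ≠ 0 := Nat.cast_ne_zero.2 (Nat.factorial_ne_zero _)
  have h2 : ((k - i).factorial : K) ≠ 0 := Nat.cast_ne_zero.2 (Nat.factorial_ne_zero _)
  have h3 : ((k + 1).factorial : K) ≠ 0 := Nat.cast_ne_zero.2 (Nat.factorial_ne_zero _)
  have hnat : (k + 1).choose (i + 1) * ((i + 1).factorial * (k - i).factorial)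
      = (k + 1).factorial := by
    have h := Nat.choose_mul_factorial_mul_factorial (show i + 1 ≤ k + 1 by omega)
    have he : k + 1 - (i + 1) = k - i := by omega
    rw [he] at h
    rw [← h]; ring
  have hcast : ((k + 1).choose (i + 1) : K) * (((i + 1).factorial : K) * ((k - i).factorial : K))
      = ((k + 1).factorial : K) := by exact_mod_cast hnat
  field_simp
  linear_combination hcast
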